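/- With the hypotheses of the previous statement (X·x = q^{-2}xX + (1-q^{-2})X² in a ℂ(q)-algebra A), for every n ≥ 0 one has (X - x)^n = ∑_{k=0}^{n} (-1)^{n-k} [n choose k]_q q^{-k(n-1)} x^{n-k} X^{k}. -/

import Mathlib

open Finset

noncomputable def qq : RatFunc ℂ := RatFunc.X

noncomputable def qint (m : ℕ) : RatFunc ℂ := (qq ^ m - qq⁻¹ ^ m) / (qq - qq⁻¹)

noncomputable def qfact : ℕ → RatFunc ℂ
  | 0 => 1
  | n + 1 => qint (n + 1) * qfact n

noncomputable def qbinom (n r : ℕ) : RatFunc ℂ :=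
  if r ≤ n then qfact n / (qfact (n - r) * qfact r) else 0

lemma qq_ne : qq ≠ 0 := RatFunc.X_ne_zero

lemma pow_sub_ne (m : ℕ) (hm : m ≠ 0) : qq ^ m - qq⁻¹ ^ m ≠ 0 := by
  have h1 : qq ^ m - qq⁻¹ ^ m = (qq ^ (2*m) - 1) * qq⁻¹ ^ m := by
    rw [sub_mul, one_mul, two_mul, pow_add, mul_assoc, ← mul_pow,
      mul_inv_cancel₀ qq_ne, one_pow, mul_one]
  rw [h1]
  apply mul_ne_zero
  · have h2 : (qq ^ (2*m) - 1 : RatFunc ℂ) =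
      algebraMap (Polynomial ℂ) (RatFunc ℂ) (Polynomial.X ^ (2*m) - 1) := by
      rw [map_sub, map_pow, map_one, qq, RatFunc.algebraMap_X]
    rw [h2, ne_eq, map_eq_zero_iff _ (RatFunc.algebraMap_injective ℂ)]
    intro hcon
    have h3 : (Polynomial.X ^ (2*m) - 1 : Polynomial ℂ).eval 2 = 0 := by
      rw [hcon]; simp
    simp only [Polynomial.eval_sub, Polynomial.eval_pow, Polynomial.eval_X,
      Polynomial.eval_one, sub_eq_zero] at h3
    have : (1:ℝ) < (2:ℝ) ^ (2*m) := one_lt_pow₀ one_lt_two (by omega)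
    have h4 : ((2:ℂ)) ^ (2*m) = ((2:ℝ) ^ (2*m) : ℝ) := by push_cast; ring
    rw [h4] at h3
    have : ((2:ℝ) ^ (2*m) : ℝ) = 1 := by exact_mod_cast h3
    linarith
  · exact pow_ne_zero _ (inv_ne_zero qq_ne)

lemma qsub_ne : qq - qq⁻¹ ≠ 0 := by
  have := pow_sub_ne 1 one_ne_zero
  simpa using this

lemma qint_ne (m : ℕ) (hm : m ≠ 0) : qint m ≠ 0 :=
  div_ne_zero (pow_sub_ne m hm) qsub_ne

lemma qfact_ne (n : ℕ) : qfact n ≠ 0 := by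
  induction n with
  | zero => simp [qfact]
  | succ k ih => exact mul_ne_zero (qint_ne _ (Nat.succ_ne_zero k)) ih

lemma qbinom_zero (n : ℕ) : qbinom n 0 = 1 := by
  simp only [qbinom, if_pos (Nat.zero_le n), Nat.sub_zero, qfact, mul_one]
  exact div_self (qfact_ne n)

lemma qbinom_self (n : ℕ) : qbinom n n = 1 := by
  simp [qbinom, qfact]
  exact qfact_ne n

lemma qbinom_gt (n : ℕ) : qbinom n (n + 1) = 0 := by
  simp [qbinom]

lemma qint_add (a b : ℕ) :
    qint (a + b + 2) = qq ^ (b + 1) * qint (a + 1) + qq⁻¹ ^ (a + 1) * qint (b + 1) := by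
  have key : qq ^ (a + b + 2) - qq⁻¹ ^ (a + b + 2) =
      qq ^ (b + 1) * (qq ^ (a + 1) - qq⁻¹ ^ (a + 1))
        + qq⁻¹ ^ (a + 1) * (qq ^ (b + 1) - qq⁻¹ ^ (b + 1)) := by
    field_simp
    ring
  unfold qint
  rw [← mul_div_assoc, ← mul_div_assoc, ← add_div, key]

lemma qpascal (a b : ℕ) :
    qbinom (a + b + 2) (a + 1) =
      qq ^ (b + 1) * qbinom (a + b + 1) a + qq⁻¹ ^ (a + 1) * qbinom (a + b + 1) (a + 1) := by
  have h1 : a + 1 ≤ a + b + 2 := by omega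
  have h2 : a ≤ a + b + 1 := by omega
  have h3 : a + 1 ≤ a + b + 1 := by omega
  simp only [qbinom, if_pos h1, if_pos h2, if_pos h3]
  have e1 : a + b + 2 - (a + 1) = b + 1 := by omega
  have e2 : a + b + 1 - a = b + 1 := by omega
  have e3 : a + b + 1 - (a + 1) = b := by omega
  rw [e1, e2, e3]
  have hf : ∀ m : ℕ, qfact m ≠ 0 := qfact_ne
  have fa : qfact (a + 1) = qint (a + 1) * qfact a := rfl
  have fb : qfact (b + 1) = qint (b + 1) * qfact b := rfl
  have fn : qfact (a + b + 2) = qint (a + b + 2) * qfact (a + b + 1) := rfl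
  have hia : qint (a + 1) ≠ 0 := qint_ne _ (Nat.succ_ne_zero a)
  have hib : qint (b + 1) ≠ 0 := qint_ne _ (Nat.succ_ne_zero b)
  have hD1 : qint (b + 1) * qfact b * qfact a ≠ 0 :=
    mul_ne_zero (mul_ne_zero hib (qfact_ne b)) (qfact_ne a)
  have hD2 : qfact b * (qint (a + 1) * qfact a) ≠ 0 :=
    mul_ne_zero (qfact_ne b) (mul_ne_zero hia (qfact_ne a))
  have hL : qint (b + 1) * qfact b * (qint (a + 1) * qfact a) ≠ 0 :=
    mul_ne_zero (mul_ne_zero hib (qfact_ne b)) (mul_ne_zero hia (qfact_ne a))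
  rw [fn, qint_add a b, fa, fb, ← mul_div_assoc, ← mul_div_assoc,
    div_add_div _ _ hD1 hD2, div_eq_div_iff hL (mul_ne_zero hD1 hD2)]
  ring

noncomputable def cc (n k : ℕ) : RatFunc ℂ :=
  (-1) ^ (n - k) * qbinom n k * qq⁻¹ ^ (k * (n - 1))

lemma cc_zero (n : ℕ) : cc (n + 1) 0 = -(cc n 0 * qq⁻¹ ^ (2 * 0)) := by
  simp [cc, qbinom_zero, pow_succ]

lemma cc_gt (n : ℕ) : cc n (n + 1) = 0 := by
  simp [cc, qbinom_gt]

lemma cc_mid (a b : ℕ) :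
    cc (a + b + 2) (a + 1) =
      cc (a + b + 1) a * qq⁻¹ ^ (2 * a) - cc (a + b + 1) (a + 1) * qq⁻¹ ^ (2 * (a + 1)) := by
  have e0 : a + b + 2 - (a + 1) = b + 1 := by omega
  have e1 : a + b + 2 - 1 = a + b + 1 := by omega
  have e2 : a + b + 1 - a = b + 1 := by omega
  have e3 : a + b + 1 - (a + 1) = b := by omega
  have e4 : a + b + 1 - 1 = a + b := by omega
  simp only [cc, e0, e1, e2, e3, e4]
  rw [show (a + 1) * (a + b + 1) = (b + 1) + (a * (a + b) + 2 * a) from by ring,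
    pow_add, qpascal a b,
    show (a + 1) * (a + b) = a * (a + b) + (a + b) from by ring]
  have h3 : qq ^ (b + 1) * qq⁻¹ ^ (b + 1) = 1 := by
    rw [← mul_pow, mul_inv_cancel₀ qq_ne, one_pow]
  linear_combination ((-1 : RatFunc ℂ)) ^ (b + 1) * qbinom (a + b + 1) a *
    qq⁻¹ ^ (a * (a + b) + 2 * a) * h3

lemma cc_top (n : ℕ) :
    cc (n + 1) (n + 1) =
      cc n n * qq⁻¹ ^ (2 * n) - cc n (n + 1) * qq⁻¹ ^ (2 * (n + 1)) := by
  rw [cc_gt, zero_mul, sub_zero]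
  simp only [cc, Nat.sub_self, pow_zero, qbinom_self, one_mul, mul_one,
    Nat.add_sub_cancel]
  rw [← pow_add]
  congr 1
  cases n with
  | zero => rfl
  | succ m => simp only [Nat.add_sub_cancel]; ring

lemma cc_succ (n j : ℕ) (hj : j ≤ n) :
    cc (n + 1) (j + 1) =
      cc n j * qq⁻¹ ^ (2 * j) - cc n (j + 1) * qq⁻¹ ^ (2 * (j + 1)) := by
  rcases Nat.lt_or_ge j n with hlt | hge
  · obtain ⟨b, rfl⟩ : ∃ b, n = j + b + 1 := ⟨n - j - 1, by omega⟩
    exact cc_mid j b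
  · have : j = n := le_antisymm hj hge
    subst this
    exact cc_top j

/-- (X-x)ⁿ = ∑ₖ (-1)^{n-k} [n k]_q q^{-k(n-1)} x^{n-k} Xᵏ. -/
theorem stmt4 {A : Type*} [Ring A] [Algebra (RatFunc ℂ) A] (x X : A)
    (h : X * x = algebraMap (RatFunc ℂ) A (qq⁻¹ ^ 2) * (x * X)
        + (1 - algebraMap (RatFunc ℂ) A (qq⁻¹ ^ 2)) * X ^ 2) (n : ℕ) :
    (X - x) ^ n = ∑ k ∈ Finset.range (n + 1),
        algebraMap (RatFunc ℂ) A ((-1) ^ (n - k) * qbinom n k * qq⁻¹ ^ (k * (n - 1)))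
          * (x ^ (n - k) * X ^ k) := by
  have hs : X * x = (qq⁻¹ ^ 2) • (x * X) + ((1 : RatFunc ℂ) - qq⁻¹ ^ 2) • X ^ 2 := by
    rw [h, Algebra.smul_def, Algebra.smul_def, map_sub, map_one]
  have h' : ∀ k : ℕ, X ^ k * x
      = (qq⁻¹ ^ (2 * k)) • (x * X ^ k) + ((1 : RatFunc ℂ) - qq⁻¹ ^ (2 * k)) • X ^ (k + 1) := by
    intro k
    induction k with
    | zero => simp
    | succ k ih =>
      rw [pow_succ', mul_assoc, ih, mul_add, mul_smul_comm, mul_smul_comm,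
        ← mul_assoc X x, hs, add_mul, smul_mul_assoc, smul_mul_assoc, mul_assoc x X,
        ← pow_succ', ← pow_succ']
      rw [show X ^ 2 * X ^ k = X ^ (k + 1 + 1) from by rw [← pow_add]; congr 1; omega]
      rw [smul_add, smul_smul, smul_smul, add_assoc, ← add_smul]
      congr 1
      · congr 1
        ring
      · congr 1
        ring
  suffices hmain : (X - x) ^ n = ∑ k ∈ Finset.range (n + 1), cc n k • (x ^ (n - k) * X ^ k) by
    rw [hmain]
    simp only [Algebra.smul_def, cc]
  induction n with
  | zero => simp [cc, qbinom_zero]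
  | succ n ih =>
    rw [pow_succ, ih, Finset.sum_mul]
    have step : ∀ k ∈ Finset.range (n + 1),
        (cc n k • (x ^ (n - k) * X ^ k)) * (X - x)
          = (cc n k * qq⁻¹ ^ (2 * k)) • (x ^ (n - k) * X ^ (k + 1))
            - (cc n k * qq⁻¹ ^ (2 * k)) • (x ^ (n + 1 - k) * X ^ k) := by
      intro k hk
      have hkn : k ≤ n := by simpa using Nat.lt_succ_iff.mp (Finset.mem_range.mp hk)
      have ex : n + 1 - k = (n - k) + 1 := by omega
      rw [ex, smul_mul_assoc, mul_sub, mul_assoc (x ^ (n - k)) (X ^ k) X, ← pow_succ,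
        mul_assoc (x ^ (n - k)) (X ^ k) x, h' k, mul_add, mul_smul_comm, mul_smul_comm,
        ← mul_assoc (x ^ (n - k)) x, ← pow_succ]
      rw [smul_sub, smul_add, smul_smul, smul_smul, sub_add_eq_sub_sub, sub_right_comm,
        ← sub_smul]
      congr 2
      all_goals ring
    rw [Finset.sum_congr rfl step, Finset.sum_sub_distrib]
    -- now RHS target
    have hF : (∑ k ∈ Finset.range (n + 1),
          (cc n k * qq⁻¹ ^ (2 * k)) • (x ^ (n - k) * X ^ (k + 1)))
        = ∑ k ∈ Finset.range (n + 2),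
          (if k = 0 then 0 else (cc n (k - 1) * qq⁻¹ ^ (2 * (k - 1))) • (x ^ (n + 1 - k) * X ^ k)) := by
      rw [Finset.sum_range_succ' _ (n + 1)]
      simp
    have hG : (∑ k ∈ Finset.range (n + 1),
          (cc n k * qq⁻¹ ^ (2 * k)) • (x ^ (n + 1 - k) * X ^ k))
        = ∑ k ∈ Finset.range (n + 2),
          (cc n k * qq⁻¹ ^ (2 * k)) • (x ^ (n + 1 - k) * X ^ k) := by
      rw [Finset.sum_range_succ _ (n + 1), cc_gt, zero_mul, zero_smul, add_zero]
    rw [hF, hG, ← Finset.sum_sub_distrib]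
    apply Finset.sum_congr rfl
    intro k hk
    have hk2 : k < n + 2 := Finset.mem_range.mp hk
    cases k with
    | zero =>
      simp [cc_zero]
    | succ j =>
      have hj : j ≤ n := by omega
      simp only [Nat.succ_ne_zero, if_false, Nat.add_sub_cancel]
      rw [cc_succ n j hj, sub_smul]
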